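/- Let n ≥ 1 and let F be an upset of a De Morgan lattice L. Then F is a consistent prime n-filter on L if and only if there exists a homomorphism of De Morgan lattices h : L → (Fin n → Bool × Bool) such that (h x i).1 = true implies (h x i).2 = true for all x ∈ L and i : Fin n (i.e., h takes values in the subalgebra Kₙ of DMₙ), and F = {x : ∃ i, (h x i).1 = true}. -/
import Mathlib


/-- A De Morgan lattice: a distributive lattice with an antitone involution. -/
class DeMorgan (L : Type*) extends DistribLattice L where
  dneg : L → L
  dneg_dneg : ∀ x : L, dneg (dneg x) = x
  dneg_sup : ∀ x y : L, dneg (x ⊔ y) = dneg x ⊓ dneg y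

prefix:max "∼" => DeMorgan.dneg

section Defs

variable {α : Type*}

/-- An upward closed subset of a lattice. -/
def IsUpset [Lattice α] (F : Set α) : Prop :=
  ∀ ⦃x y : α⦄, x ∈ F → x ≤ y → y ∈ F

/-- A lattice filter: an upset closed under binary meets. -/
def IsLatFilter [Lattice α] (F : Set α) : Prop :=
  IsUpset F ∧ ∀ x y : α, x ∈ F → y ∈ F → x ⊓ y ∈ F

/-- An `n`-filter: an upset such that for every nonempty finite `Y`, if the meet of
every nonempty subset of `Y` of size at most `n` lies in `F`, then so does the meet of `Y`. -/
def IsNFilter [Lattice α] (n : ℕ) (F : Set α) : Prop :=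
  IsUpset F ∧ ∀ (Y : Finset α) (hY : Y.Nonempty),
    (∀ (X : Finset α) (hX : X.Nonempty), X ⊆ Y → X.card ≤ n → X.inf' hX id ∈ F) →
    Y.inf' hY id ∈ F

/-- A prime upset: `x ⊔ y ∈ F` implies `x ∈ F` or `y ∈ F`. -/
def IsPrimeUpset [Lattice α] (F : Set α) : Prop :=
  ∀ x y : α, x ⊔ y ∈ F → x ∈ F ∨ y ∈ F

/-- A downward closed subset of a lattice. -/
def IsDownset [Lattice α] (I : Set α) : Prop :=
  ∀ ⦃x y : α⦄, x ∈ I → y ≤ x → y ∈ I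

/-- A lattice ideal: a downset closed under binary joins. -/
def IsIdeal [Lattice α] (I : Set α) : Prop :=
  IsDownset I ∧ ∀ x y : α, x ∈ I → y ∈ I → x ⊔ y ∈ I

/-- An `n`-ideal: the order dual notion of an `n`-filter. -/
def IsNIdeal [Lattice α] (n : ℕ) (I : Set α) : Prop :=
  IsDownset I ∧ ∀ (Y : Finset α) (hY : Y.Nonempty),
    (∀ (X : Finset α) (hX : X.Nonempty), X ⊆ Y → X.card ≤ n → X.sup' hX id ∈ I) →
    Y.sup' hY id ∈ I

variable {L : Type*} [DeMorgan L]

/-- Almost complete upset: `x ∈ F` implies `x ⊓ (y ⊔ ∼y) ∈ F`. -/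
def AlmostComplete (F : Set L) : Prop := ∀ x ∈ F, ∀ y : L, x ⊓ (y ⊔ ∼y) ∈ F

/-- Complete upset: almost complete and nonempty. -/
def IsCompleteUpset (F : Set L) : Prop := AlmostComplete F ∧ F.Nonempty

/-- Almost consistent upset: `(x ⊓ ∼x) ⊔ y ∈ F` implies `y ∈ F`. -/
def AlmostConsistent (F : Set L) : Prop := ∀ x y : L, (x ⊓ ∼x) ⊔ y ∈ F → y ∈ F

/-- Consistent upset: almost consistent and not total. -/
def IsConsistentUpset (F : Set L) : Prop := AlmostConsistent F ∧ F ≠ Set.univ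

/-- Classical upset: complete and consistent. -/
def IsClassicalUpset (F : Set L) : Prop := IsCompleteUpset F ∧ IsConsistentUpset F

/-- Kalman upset. -/
def IsKalmanUpset (F : Set L) : Prop :=
  ∀ x y z u : L, ((x ⊓ ∼x) ⊓ z) ⊔ u ∈ F → ((y ⊔ ∼y) ⊓ z) ⊔ u ∈ F

/-- A homomorphism of De Morgan lattices. -/
def IsDMHom {L M : Type*} [DeMorgan L] [DeMorgan M] (h : L → M) : Prop :=
  (∀ x y : L, h (x ⊓ y) = h x ⊓ h y) ∧ (∀ x y : L, h (x ⊔ y) = h x ⊔ h y) ∧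
    ∀ x : L, h (∼x) = ∼(h x)

/-- The filter generated by all elements of the form `x ⊔ ∼x`. -/
def Fcomp (L : Type*) [DeMorgan L] : Set L :=
  {a | ∃ (s : Finset L) (hs : s.Nonempty), s.inf' hs (fun x => x ⊔ ∼x) ≤ a}

/-- The `n`-filter generated by a set. -/
def nFilterGen (n : ℕ) (U : Set L) : Set L :=
  ⋂₀ {F : Set L | IsNFilter n F ∧ U ⊆ F}

/-- `Comp U`. -/
def CompCl (U : Set L) : Set L := {x | ∃ a ∈ U, ∃ f ∈ Fcomp L, a ⊓ f ≤ x}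

/-- `Cons U`. -/
def ConsCl (U : Set L) : Set L := {x | ∃ f ∈ Fcomp L, ∼f ⊔ x ∈ U}

/-- A congruence of De Morgan lattices, as a binary relation. -/
def IsCongruence (θ : L → L → Prop) : Prop :=
  Equivalence θ ∧
  (∀ a b c d : L, θ a b → θ c d → θ (a ⊓ c) (b ⊓ d)) ∧
  (∀ a b c d : L, θ a b → θ c d → θ (a ⊔ c) (b ⊔ d)) ∧
  ∀ a b : L, θ a b → θ (∼a) (∼b)

end Defs

/-- The four-element De Morgan lattice `DM₁` on `Bool × Bool`. -/
instance : DeMorgan (Bool × Bool) :=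
  { (inferInstance : DistribLattice (Bool × Bool)) with
    dneg := fun p => (!p.2, !p.1)
    dneg_dneg := by decide
    dneg_sup := by decide }

/-- Powers of `DM₁`, with componentwise operations. -/
instance {ι : Type*} : DeMorgan (ι → Bool × Bool) :=
  { (inferInstance : DistribLattice (ι → Bool × Bool)) with
    dneg := fun f i => ∼(f i)
    dneg_dneg := fun f => funext fun i => DeMorgan.dneg_dneg (f i)
    dneg_sup := fun f g => funext fun i => DeMorgan.dneg_sup (f i) (g i) }

section AuxLemmas

variable {α β : Type*}

theorem aux_prime_sup' [Lattice α] {F : Set α} (hU : IsUpset F) (hP : IsPrimeUpset F)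
    (s : Finset β) (hs : s.Nonempty) (f : β → α) :
    s.sup' hs f ∈ F → ∃ b ∈ s, f b ∈ F := by
  induction hs using Finset.Nonempty.cons_induction with
  | singleton a => intro h; exact ⟨a, Finset.mem_singleton_self a, by simpa using h⟩
  | cons a s ha hs ih =>
      intro h
      rw [Finset.sup'_cons hs] at h
      rcases hP _ _ h with h1 | h2
      · exact ⟨a, Finset.mem_cons_self a s, h1⟩
      · rcases ih h2 with ⟨b, hb, hfb⟩
        exact ⟨b, Finset.mem_cons_of_mem hb, hfb⟩

theorem aux_filter_inf' [Lattice α] {G : Set α} (hG : IsLatFilter G)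
    (s : Finset β) (hs : s.Nonempty) (f : β → α) :
    (∀ b ∈ s, f b ∈ G) → s.inf' hs f ∈ G := by
  induction hs using Finset.Nonempty.cons_induction with
  | singleton a => intro h; simpa using h a (Finset.mem_singleton_self a)
  | cons a s ha hs ih =>
      intro h
      rw [Finset.inf'_cons hs]
      exact hG.2 _ _ (h a (Finset.mem_cons_self a s))
        (ih fun b hb => h b (Finset.mem_cons_of_mem hb))

theorem aux_map_inf' {γ : Type*} [SemilatticeInf α] [SemilatticeInf γ] (f : α → γ)
    (hf : ∀ x y : α, f (x ⊓ y) = f x ⊓ f y) (s : Finset β) (hs : s.Nonempty) (g : β → α) :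
    f (s.inf' hs g) = s.inf' hs (fun b => f (g b)) := by
  induction hs using Finset.Nonempty.cons_induction with
  | singleton a => simp
  | cons a s ha hs ih => rw [Finset.inf'_cons hs, Finset.inf'_cons hs, hf, ih]

theorem aux_exists_prime_between [DistribLattice α] {H I : Set α}
    (hH : IsLatFilter H) (hHne : H.Nonempty) (hId : IsDownset I)
    (hIj : ∀ x y : α, x ∈ I → y ∈ I → x ⊔ y ∈ I) (hd : ∀ x ∈ H, x ∉ I) :
    ∃ P : Set α, IsLatFilter P ∧ IsPrimeUpset P ∧ H ⊆ P ∧ ∀ x ∈ P, x ∉ I := by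
  have hchainCond : ∀ c ⊆ {P : Set α | IsLatFilter P ∧ H ⊆ P ∧ ∀ x ∈ P, x ∉ I},
      IsChain (· ⊆ ·) c → c.Nonempty →
      ∃ ub ∈ {P : Set α | IsLatFilter P ∧ H ⊆ P ∧ ∀ x ∈ P, x ∉ I}, ∀ s ∈ c, s ⊆ ub := by
    intro c hcS hchain hcne
    refine ⟨⋃₀ c, ⟨⟨?_, ?_⟩, ?_, ?_⟩, fun s hs => Set.subset_sUnion_of_mem hs⟩
    · rintro x y ⟨A, hA, hxA⟩ hxy
      exact ⟨A, hA, (hcS hA).1.1 hxA hxy⟩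
    · rintro x y ⟨A, hA, hxA⟩ ⟨B, hB, hyB⟩
      rcases hchain.total hA hB with hAB | hBA
      · exact ⟨B, hB, (hcS hB).1.2 x y (hAB hxA) hyB⟩
      · exact ⟨A, hA, (hcS hA).1.2 x y hxA (hBA hyB)⟩
    · obtain ⟨A, hA⟩ := hcne
      exact (hcS hA).2.1.trans (Set.subset_sUnion_of_mem hA)
    · rintro x ⟨A, hA, hxA⟩
      exact (hcS hA).2.2 x hxA
  obtain ⟨m, hHm, hmax⟩ :=
    zorn_subset_nonempty {P : Set α | IsLatFilter P ∧ H ⊆ P ∧ ∀ x ∈ P, x ∉ I} hchainCond H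
      ⟨hH, subset_rfl, hd⟩
  · obtain ⟨⟨hmfil, hmH, hmI⟩, hmmax⟩ := hmax
    refine ⟨m, hmfil, ?_, hHm, hmI⟩
    intro x y hxy
    by_contra hcon
    push_neg at hcon
    obtain ⟨hx, hy⟩ := hcon
    have hmne : m.Nonempty := hHne.mono hHm
    have key : ∀ a : α, a ∉ m → ∃ p ∈ m, p ⊓ a ∈ I := by
      intro a ham
      have hQfil : IsLatFilter {z | ∃ p ∈ m, p ⊓ a ≤ z} := by
        constructor
        · rintro z w ⟨p, hp, hle⟩ hzw
          exact ⟨p, hp, hle.trans hzw⟩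
        · rintro z w ⟨p, hp, hle⟩ ⟨q, hq, hle'⟩
          exact ⟨p ⊓ q, hmfil.2 p q hp hq,
            le_inf ((inf_le_inf_right a inf_le_left).trans hle)
              ((inf_le_inf_right a inf_le_right).trans hle')⟩
      have hmQ : m ⊆ {z | ∃ p ∈ m, p ⊓ a ≤ z} := fun p hp => ⟨p, hp, inf_le_left⟩
      have haQ : a ∈ {z | ∃ p ∈ m, p ⊓ a ≤ z} := ⟨hmne.choose, hmne.choose_spec, inf_le_right⟩
      have hbad : ¬ (∀ x ∈ {z | ∃ p ∈ m, p ⊓ a ≤ z}, x ∉ I) := by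
        intro hQI
        have hsub : {z | ∃ p ∈ m, p ⊓ a ≤ z} ⊆ m :=
          hmmax ⟨hQfil, hmH.trans hmQ, hQI⟩ hmQ
        exact ham (hsub haQ)
      push_neg at hbad
      obtain ⟨z, hzQ, hzI⟩ := hbad
      obtain ⟨p, hp, hle⟩ := hzQ
      exact ⟨p, hp, hId hzI hle⟩
    obtain ⟨p₁, hp₁, hI₁⟩ := key x hx
    obtain ⟨p₂, hp₂, hI₂⟩ := key y hy
    have he : (p₁ ⊓ p₂) ⊓ (x ⊔ y) ∈ m := hmfil.2 _ _ (hmfil.2 _ _ hp₁ hp₂) hxy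
    have heq : (p₁ ⊓ p₂) ⊓ (x ⊔ y) = ((p₁ ⊓ p₂) ⊓ x) ⊔ ((p₁ ⊓ p₂) ⊓ y) := inf_sup_left _ _ _
    have h1 : (p₁ ⊓ p₂) ⊓ x ∈ I := hId hI₁ (inf_le_inf_right x inf_le_left)
    have h2 : (p₁ ⊓ p₂) ⊓ y ∈ I := hId hI₂ (inf_le_inf_right y inf_le_right)
    exact hmI _ he (heq ▸ hIj _ _ h1 h2)

theorem aux_exists_maximal_prime [DistribLattice α] {F P₀ : Set α}
    (h₀ : IsLatFilter P₀ ∧ IsPrimeUpset P₀ ∧ P₀ ⊆ F) :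
    ∃ P : Set α, (IsLatFilter P ∧ IsPrimeUpset P ∧ P ⊆ F) ∧ P₀ ⊆ P ∧
      ∀ Q : Set α, (IsLatFilter Q ∧ IsPrimeUpset Q ∧ Q ⊆ F) → P ⊆ Q → Q = P := by
  have hchainCond : ∀ c ⊆ {P : Set α | IsLatFilter P ∧ IsPrimeUpset P ∧ P ⊆ F},
      IsChain (· ⊆ ·) c → c.Nonempty →
      ∃ ub ∈ {P : Set α | IsLatFilter P ∧ IsPrimeUpset P ∧ P ⊆ F}, ∀ s ∈ c, s ⊆ ub := by
    intro c hcS hchain hcne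
    obtain ⟨A₀, hA₀⟩ := hcne
    refine ⟨⋃₀ c, ⟨⟨?_, ?_⟩, ?_, ?_⟩, fun s hs => Set.subset_sUnion_of_mem hs⟩
    · rintro x y ⟨A, hA, hxA⟩ hxy
      exact ⟨A, hA, (hcS hA).1.1 hxA hxy⟩
    · rintro x y ⟨A, hA, hxA⟩ ⟨B, hB, hyB⟩
      rcases hchain.total hA hB with hAB | hBA
      · exact ⟨B, hB, (hcS hB).1.2 x y (hAB hxA) hyB⟩
      · exact ⟨A, hA, (hcS hA).1.2 x y hxA (hBA hyB)⟩
    · rintro x y ⟨A, hA, hxA⟩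
      rcases (hcS hA).2.1 x y hxA with h | h
      · exact Or.inl ⟨A, hA, h⟩
      · exact Or.inr ⟨A, hA, h⟩
    · rintro x ⟨A, hA, hxA⟩
      exact (hcS hA).2.2 hxA
  obtain ⟨m, h0m, hmax⟩ :=
    zorn_subset_nonempty {P : Set α | IsLatFilter P ∧ IsPrimeUpset P ∧ P ⊆ F} hchainCond P₀ h₀
  exact ⟨m, hmax.1, h0m, fun Q hQ hmQ => Set.Subset.antisymm (hmax.2 hQ hmQ) hmQ⟩

theorem aux_dneg_inf {L : Type*} [DeMorgan L] (x y : L) : ∼(x ⊓ y) = ∼x ⊔ ∼y := by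
  have h := DeMorgan.dneg_sup (∼x) (∼y)
  rw [DeMorgan.dneg_dneg, DeMorgan.dneg_dneg] at h
  rw [← h, DeMorgan.dneg_dneg]

theorem aux_no_conflicting_family [DistribLattice α] {F : Set α} {n : ℕ} (hn : 1 ≤ n)
    (hU : IsUpset F) (hP : IsPrimeUpset F) (hNF : IsNFilter n F)
    (b : Fin (n+1) → α) (hb : ∀ i, b i ∈ F)
    (hbb : ∀ i j : Fin (n+1), i ≠ j → b i ⊓ b j ∉ F) : False := by
  classical
  have hne1 : ∀ i : Fin (n+1), (Finset.univ.erase i).Nonempty := by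
    intro i
    rw [← Finset.card_pos, Finset.card_erase_of_mem (Finset.mem_univ i), Finset.card_univ,
      Fintype.card_fin]
    omega
  set c : Fin (n+1) → α := fun i => (Finset.univ.erase i).sup' (hne1 i) b with hc
  set Y : Finset α := Finset.image c Finset.univ with hY
  have hYne : Y.Nonempty := ⟨c 0, Finset.mem_image_of_mem c (Finset.mem_univ 0)⟩
  have hsub : ∀ (X : Finset α) (hX : X.Nonempty), X ⊆ Y → X.card ≤ n → X.inf' hX id ∈ F := by
    intro X hX hXY hXc
    have hsel : ∀ x, x ∈ X → ∃ i : Fin (n+1), c i = x := by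
      intro x hx
      obtain ⟨i, -, hi⟩ := Finset.mem_image.mp (hXY hx)
      exact ⟨i, hi⟩
    choose! φ hφ using hsel
    have hScard : (X.image φ).card < n + 1 :=
      lt_of_le_of_lt (le_trans Finset.card_image_le hXc) (Nat.lt_succ_self n)
    have hk : ∃ k : Fin (n+1), k ∉ X.image φ := by
      by_contra hk
      push_neg at hk
      have h1 : (Finset.univ : Finset (Fin (n+1))) ⊆ X.image φ := fun k _ => hk k
      have h2 := Finset.card_le_card h1
      rw [Finset.card_univ, Fintype.card_fin] at h2
      omega
    obtain ⟨k, hk⟩ := hk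
    have hle : b k ≤ X.inf' hX id := by
      apply Finset.le_inf'
      intro x hx
      have hφx : φ x ≠ k := fun h => hk (h ▸ Finset.mem_image_of_mem φ hx)
      have h1 : b k ≤ c (φ x) :=
        Finset.le_sup' b (Finset.mem_erase.mpr ⟨Ne.symm hφx, Finset.mem_univ k⟩)
      rw [hφ x hx] at h1
      exact h1
    exact hU (hb k) hle
  have hm : Y.inf' hYne id ∈ F := hNF.2 Y hYne hsub
  have hmc : ∀ i, Y.inf' hYne id ≤ c i := fun i =>
    Finset.inf'_le id (Finset.mem_image_of_mem c (Finset.mem_univ i))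
  have h1 : Y.inf' hYne id
      = (Finset.univ.erase (0 : Fin (n+1))).sup' (hne1 0) (fun j => Y.inf' hYne id ⊓ b j) := by
    rw [← Finset.sup'_inf_distrib_left]
    exact (inf_eq_left.mpr (hmc 0)).symm
  obtain ⟨j, hjmem, hj⟩ := aux_prime_sup' hU hP _ (hne1 0) _ (h1 ▸ hm)
  have h2 : Y.inf' hYne id ⊓ b j
      = (Finset.univ.erase j).sup' (hne1 j) (fun k => (Y.inf' hYne id ⊓ b j) ⊓ b k) := by
    rw [← Finset.sup'_inf_distrib_left]
    exact (inf_eq_left.mpr (le_trans inf_le_left (hmc j))).symm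
  obtain ⟨k, hkmem, hk2⟩ := aux_prime_sup' hU hP _ (hne1 j) _ (h2 ▸ hj)
  have hkj : k ≠ j := (Finset.mem_erase.mp hkmem).1
  have hjk : b j ⊓ b k ∈ F :=
    hU hk2 (le_inf (le_trans inf_le_left inf_le_right) inf_le_right)
  exact hbb j k (Ne.symm hkj) hjk

theorem aux_conflict [DistribLattice α] {F G G' : Set α} (hU : IsUpset F) (hP : IsPrimeUpset F)
    (hG : (IsLatFilter G ∧ IsPrimeUpset G ∧ G ⊆ F) ∧
      ∀ Q : Set α, (IsLatFilter Q ∧ IsPrimeUpset Q ∧ Q ⊆ F) → G ⊆ Q → Q = G)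
    (hG' : (IsLatFilter G' ∧ IsPrimeUpset G' ∧ G' ⊆ F) ∧
      ∀ Q : Set α, (IsLatFilter Q ∧ IsPrimeUpset Q ∧ Q ⊆ F) → G' ⊆ Q → Q = G')
    (hne : G ≠ G') : ∃ u ∈ G, ∃ v ∈ G', u ⊓ v ∉ F := by
  by_contra hc
  push_neg at hc
  have hGne : G.Nonempty := by
    rw [Set.nonempty_iff_ne_empty]
    intro hge
    exact hne (hG.2 G' hG'.1 (by rw [hge]; exact Set.empty_subset _)).symm
  have hG'ne : G'.Nonempty := by
    rw [Set.nonempty_iff_ne_empty]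
    intro hge
    exact hne (hG'.2 G hG.1 (by rw [hge]; exact Set.empty_subset _))
  obtain ⟨g0, hg0⟩ := hGne
  obtain ⟨g0', hg0'⟩ := hG'ne
  have hHfil : IsLatFilter {z | ∃ u ∈ G, ∃ v ∈ G', u ⊓ v ≤ z} := by
    constructor
    · rintro z w ⟨u, hu, v, hv, hle⟩ hzw
      exact ⟨u, hu, v, hv, hle.trans hzw⟩
    · rintro z w ⟨u1, hu1, v1, hv1, hle1⟩ ⟨u2, hu2, v2, hv2, hle2⟩
      refine ⟨u1 ⊓ u2, hG.1.1.2 _ _ hu1 hu2, v1 ⊓ v2, hG'.1.1.2 _ _ hv1 hv2, ?_⟩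
      have e1 : (u1 ⊓ u2) ⊓ (v1 ⊓ v2) ≤ u1 ⊓ v1 :=
        le_inf (le_trans inf_le_left inf_le_left) (le_trans inf_le_right inf_le_left)
      have e2 : (u1 ⊓ u2) ⊓ (v1 ⊓ v2) ≤ u2 ⊓ v2 :=
        le_inf (le_trans inf_le_left inf_le_right) (le_trans inf_le_right inf_le_right)
      exact le_inf (e1.trans hle1) (e2.trans hle2)
  have hGH : G ⊆ {z | ∃ u ∈ G, ∃ v ∈ G', u ⊓ v ≤ z} := fun g hg => ⟨g, hg, g0', hg0', inf_le_left⟩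
  have hG'H : G' ⊆ {z | ∃ u ∈ G, ∃ v ∈ G', u ⊓ v ≤ z} := fun g hg => ⟨g0, hg0, g, hg, inf_le_right⟩
  have hHne : Set.Nonempty {z | ∃ u ∈ G, ∃ v ∈ G', u ⊓ v ≤ z} := ⟨g0, hGH hg0⟩
  have hcd : IsDownset (Fᶜ : Set α) := fun x y hx hyx hyF => hx (hU hyF hyx)
  have hcj : ∀ x y : α, x ∈ (Fᶜ : Set α) → y ∈ (Fᶜ : Set α) → x ⊔ y ∈ (Fᶜ : Set α) :=
    fun x y hx hy hxy => (hP x y hxy).elim hx hy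
  have hHd : ∀ z ∈ {z | ∃ u ∈ G, ∃ v ∈ G', u ⊓ v ≤ z}, z ∉ (Fᶜ : Set α) := by
    rintro z ⟨u, hu, v, hv, hle⟩ hzc
    exact hzc (hU (hc u hu v hv) hle)
  obtain ⟨P, hPfil, hPpr, hHP, hPd⟩ := aux_exists_prime_between hHfil hHne hcd hcj hHd
  have hPF : P ⊆ F := fun z hz => by simpa using hPd z hz
  have e1 : P = G := hG.2 P ⟨hPfil, hPpr, hPF⟩ (hGH.trans hHP)
  have e2 : P = G' := hG'.2 P ⟨hPfil, hPpr, hPF⟩ (hG'H.trans hHP)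
  exact hne (e1.symm.trans e2)

end AuxLemmas
/-- consistent prime `n`-filters are precisely the preimages of the designated
set of `DMₙ` under De Morgan homomorphisms landing in the subalgebra `Kₙ`. -/
theorem statement5 {L : Type*} [DeMorgan L] [Nonempty L] (n : ℕ) (hn : 1 ≤ n)
    (F : Set L) (hF : IsUpset F) :
    (IsConsistentUpset F ∧ IsPrimeUpset F ∧ IsNFilter n F) ↔
      ∃ h : L → (Fin n → Bool × Bool), IsDMHom h ∧
        (∀ (x : L) (i : Fin n), (h x i).1 = true → (h x i).2 = true) ∧
        F = {x : L | ∃ i : Fin n, (h x i).1 = true} := by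
  classical
  constructor
  · rintro ⟨⟨hAC, hFneq⟩, hprime, hnfil⟩
    have hcd : IsDownset (Fᶜ : Set L) := fun x y hx hyx hyF => hx (hF hyF hyx)
    have hcj : ∀ x y : L, x ∈ (Fᶜ : Set L) → y ∈ (Fᶜ : Set L) → x ⊔ y ∈ (Fᶜ : Set L) :=
      fun x y hx hy hxy => (hprime x y hxy).elim hx hy
    set MaxP : Set (Set L) := {G | (IsLatFilter G ∧ IsPrimeUpset G ∧ G ⊆ F) ∧
      ∀ Q : Set L, (IsLatFilter Q ∧ IsPrimeUpset Q ∧ Q ⊆ F) → G ⊆ Q → Q = G} with hMaxP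
    have hcover : ∀ x ∈ F, ∃ M ∈ MaxP, x ∈ M := by
      intro x hx
      have hIci : IsLatFilter (Set.Ici x) :=
        ⟨fun a b ha hab => le_trans ha hab, fun a b ha hb => le_inf ha hb⟩
      obtain ⟨P, hPfil, hPpr, hPx, hPd⟩ :=
        aux_exists_prime_between hIci ⟨x, le_refl x⟩ hcd hcj (fun z hz hzc => hzc (hF hx hz))
      have hPF : P ⊆ F := fun z hz => by simpa using hPd z hz
      obtain ⟨M, hMS, hPM, hMmax⟩ := aux_exists_maximal_prime ⟨hPfil, hPpr, hPF⟩
      exact ⟨M, ⟨hMS, hMmax⟩, hPM (hPx (le_refl x))⟩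
    have hGcons : ∀ G : Set L, IsLatFilter G → G ⊆ F → ∀ x : L, x ∈ G → ∼x ∈ G → False := by
      intro G hGfil hGF x hx hnx
      have hxF : x ⊓ ∼x ∈ F := hGF (hGfil.2 x (∼x) hx hnx)
      apply hFneq
      apply Set.eq_univ_iff_forall.mpr
      intro y
      exact hAC x y (hF hxF le_sup_left)
    have hnobig : ∀ G' : Fin (n+1) → Set L, (∀ i, G' i ∈ MaxP) → Function.Injective G' → False := by
      intro G' hG' hinj
      have hconf : ∀ i j : Fin (n+1), i ≠ j → ∃ u ∈ G' i, ∃ v ∈ G' j, u ⊓ v ∉ F :=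
        fun i j hij => aux_conflict hF hprime (hG' i) (hG' j) (fun he => hij (hinj he))
      choose! u hu v hv huv using hconf
      have hne1 : ∀ i : Fin (n+1), (Finset.univ.erase i).Nonempty := by
        intro i
        rw [← Finset.card_pos, Finset.card_erase_of_mem (Finset.mem_univ i), Finset.card_univ,
          Fintype.card_fin]
        omega
      obtain ⟨b, hbdef⟩ : ∃ b : Fin (n+1) → L, ∀ i,
          b i = (Finset.univ.erase i).inf' (hne1 i) (fun j => u i j ⊓ v j i) :=
        ⟨_, fun i => rfl⟩
      have hbG : ∀ i, b i ∈ G' i := by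
        intro i
        rw [hbdef i]
        apply aux_filter_inf' ((hG' i).1).1
        intro j hj
        have hji : j ≠ i := (Finset.mem_erase.mp hj).1
        exact ((hG' i).1).1.2 _ _ (hu i j (Ne.symm hji)) (hv j i hji)
      have hbF : ∀ i, b i ∈ F := fun i => ((hG' i).1).2.2 (hbG i)
      have hbb : ∀ i j : Fin (n+1), i ≠ j → b i ⊓ b j ∉ F := by
        intro i j hij hmem
        apply huv i j hij
        apply hF hmem
        have h1 : b i ≤ u i j := by
          rw [hbdef i]
          exact le_trans
            (Finset.inf'_le _ (Finset.mem_erase.mpr ⟨Ne.symm hij, Finset.mem_univ j⟩)) inf_le_left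
        have h2 : b j ≤ v i j := by
          rw [hbdef j]
          exact le_trans
            (Finset.inf'_le _ (Finset.mem_erase.mpr ⟨hij, Finset.mem_univ i⟩)) inf_le_right
        exact le_inf (le_trans inf_le_left h1) (le_trans inf_le_right h2)
      exact aux_no_conflicting_family hn hF hprime hnfil b hbF hbb
    have hnot : ∀ t : Finset (Set L), ↑t ⊆ MaxP → t.card ≠ n + 1 := by
      intro t ht hcard
      have e : { x // x ∈ t } ≃ Fin (n+1) := t.equivFin.trans (finCongr hcard)
      apply hnobig (fun i => ((e.symm i : { x // x ∈ t }) : Set L))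
      · intro i
        exact ht (e.symm i).2
      · intro i j hij
        exact e.symm.injective (Subtype.ext hij)
    have hfin : MaxP.Finite := by
      by_contra hinf
      obtain ⟨t, hts, htf, htc⟩ := Set.Infinite.exists_subset_ncard_eq hinf (n+1)
      exact hnot htf.toFinset (by rw [Set.Finite.coe_toFinset]; exact hts)
        (by rw [← Set.ncard_eq_toFinset_card t htf]; exact htc)
    have hcard : MaxP.ncard ≤ n := by
      by_contra hlt
      push_neg at hlt
      obtain ⟨t, hts, htc⟩ := Set.exists_subset_card_eq (show n + 1 ≤ MaxP.ncard from hlt)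
      have htf : t.Finite := hfin.subset hts
      exact hnot htf.toFinset (by rw [Set.Finite.coe_toFinset]; exact hts)
        (by rw [← Set.ncard_eq_toFinset_card t htf]; exact htc)
    have hlen : hfin.toFinset.toList.length ≤ n := by
      rw [Finset.length_toList, ← Set.ncard_eq_toFinset_card MaxP hfin]
      exact hcard
    obtain ⟨G, hGdef⟩ : ∃ G : Fin n → Set L, ∀ i : Fin n,
        G i = hfin.toFinset.toList.getD i ∅ := ⟨_, fun i => rfl⟩
    have hGcases : ∀ i : Fin n, G i = ∅ ∨ G i ∈ MaxP := by
      intro i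
      by_cases hi : (i : ℕ) < hfin.toFinset.toList.length
      · right
        have hGi : G i = hfin.toFinset.toList[(i : ℕ)] := by
          rw [hGdef i, List.getD_eq_getElem?_getD, List.getElem?_eq_getElem hi]
          rfl
        rw [hGi]
        exact (Set.Finite.mem_toFinset hfin).mp
          (Finset.mem_toList.mp (List.getElem_mem hi))
      · left
        rw [hGdef i, List.getD_eq_getElem?_getD, List.getElem?_eq_none (le_of_not_gt hi)]
        rfl
    have hGcover : ∀ x ∈ F, ∃ i : Fin n, x ∈ G i := by
      intro x hx
      obtain ⟨M, hM, hxM⟩ := hcover x hx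
      have hMl : M ∈ hfin.toFinset.toList :=
        Finset.mem_toList.mpr ((Set.Finite.mem_toFinset hfin).mpr hM)
      obtain ⟨k, hk, hkM⟩ := List.mem_iff_getElem.mp hMl
      refine ⟨⟨k, lt_of_lt_of_le hk hlen⟩, ?_⟩
      have : G ⟨k, lt_of_lt_of_le hk hlen⟩ = M := by
        rw [hGdef, List.getD_eq_getElem?_getD, List.getElem?_eq_getElem hk]
        exact hkM
      rw [this]
      exact hxM
    have hGfil : ∀ i, IsLatFilter (G i) := by
      intro i
      rcases hGcases i with h | h
      · rw [h]
        exact ⟨fun x y hx _ => hx.elim, fun x y hx _ => hx.elim⟩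
      · exact h.1.1
    have hGpr : ∀ i, IsPrimeUpset (G i) := by
      intro i
      rcases hGcases i with h | h
      · rw [h]
        exact fun x y hxy => hxy.elim
      · exact h.1.2.1
    have hGF : ∀ i, G i ⊆ F := by
      intro i
      rcases hGcases i with h | h
      · rw [h]
        exact Set.empty_subset F
      · exact h.1.2.2
    have hGc : ∀ (i : Fin n) (x : L), x ∈ G i → ∼x ∉ G i := by
      intro i x hx hnx
      rcases hGcases i with h | h
      · rw [h] at hx
        exact hx
      · exact hGcons (G i) h.1.1 h.1.2.2 x hx hnx
    have mem_inf : ∀ (i : Fin n) (x y : L), x ⊓ y ∈ G i ↔ x ∈ G i ∧ y ∈ G i :=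
      fun i x y => ⟨fun hm => ⟨(hGfil i).1 hm inf_le_left, (hGfil i).1 hm inf_le_right⟩,
        fun hxy => (hGfil i).2 x y hxy.1 hxy.2⟩
    have mem_sup : ∀ (i : Fin n) (x y : L), x ⊔ y ∈ G i ↔ x ∈ G i ∨ y ∈ G i :=
      fun i x y => ⟨hGpr i x y, fun hxy => hxy.elim (fun hx => (hGfil i).1 hx le_sup_left)
        (fun hy => (hGfil i).1 hy le_sup_right)⟩
    have hpair_inf : ∀ a c : Bool × Bool, a ⊓ c = (a.1 && c.1, a.2 && c.2) := by decide
    have hpair_sup : ∀ a c : Bool × Bool, a ⊔ c = (a.1 || c.1, a.2 || c.2) := by decide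
    have hbneg : ∀ a : Bool × Bool, ∼a = (!a.2, !a.1) := fun a => rfl
    refine ⟨fun x i => (if x ∈ G i then true else false, if ∼x ∈ G i then false else true),
      ⟨?_, ?_, ?_⟩, ?_, ?_⟩
    · intro x y
      funext i
      have e2 : ∼(x ⊓ y) ∈ G i ↔ (∼x ∈ G i ∨ ∼y ∈ G i) := by
        rw [aux_dneg_inf]
        exact mem_sup i _ _
      by_cases h1 : x ∈ G i <;> by_cases h2 : y ∈ G i <;>
        by_cases h3 : ∼x ∈ G i <;> by_cases h4 : ∼y ∈ G i <;>
        simp [mem_inf i x y, e2, h1, h2, h3, h4, Pi.inf_apply, hpair_inf]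
    · intro x y
      funext i
      have e2 : ∼(x ⊔ y) ∈ G i ↔ (∼x ∈ G i ∧ ∼y ∈ G i) := by
        rw [DeMorgan.dneg_sup]
        exact mem_inf i _ _
      by_cases h1 : x ∈ G i <;> by_cases h2 : y ∈ G i <;>
        by_cases h3 : ∼x ∈ G i <;> by_cases h4 : ∼y ∈ G i <;>
        simp [mem_sup i x y, e2, h1, h2, h3, h4, Pi.sup_apply, hpair_sup]
    · intro x
      funext i
      have hpineg : ∀ (f : Fin n → Bool × Bool) (i : Fin n), (∼f) i = ∼(f i) := fun f i => rfl
      by_cases h1 : x ∈ G i <;> by_cases h2 : ∼x ∈ G i <;>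
        simp [DeMorgan.dneg_dneg, h1, h2, hbneg, hpineg]
    · intro x i
      by_cases h1 : x ∈ G i <;> by_cases h2 : ∼x ∈ G i
      · exact fun _ => (hGc i x h1 h2).elim
      · simp [h1, h2]
      · simp [h1, h2]
      · simp [h1, h2]
    · ext x
      simp only [Set.mem_setOf_eq]
      constructor
      · intro hx
        obtain ⟨i, hi⟩ := hGcover x hx
        exact ⟨i, by simp [hi]⟩
      · rintro ⟨i, hi⟩
        by_cases h1 : x ∈ G i
        · exact hGF i h1
        · simp [h1] at hi
  · rintro ⟨h, ⟨hhi, hhs, hhn⟩, hK, hFeq⟩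
    have hinf' : ∀ (x y : L) (i : Fin n), h (x ⊓ y) i = h x i ⊓ h y i := fun x y i => by
      rw [hhi]; rfl
    have hsup' : ∀ (x y : L) (i : Fin n), h (x ⊔ y) i = h x i ⊔ h y i := fun x y i => by
      rw [hhs]; rfl
    have hneg' : ∀ (x : L) (i : Fin n), h (∼x) i = ∼(h x i) := fun x i => by
      rw [hhn]; rfl
    have hkey : ∀ a : Bool × Bool, (a.1 = true → a.2 = true) → (a ⊓ ∼a).1 = false := by decide
    have hsupfst : ∀ a c : Bool × Bool, (a ⊔ c).1 = (a.1 || c.1) := by decide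
    have hmemF : ∀ x : L, x ∈ F ↔ ∃ i : Fin n, (h x i).1 = true := fun x => by
      rw [hFeq]; exact Iff.rfl
    have hxnx : ∀ (x : L) (i : Fin n), (h (x ⊓ ∼x) i).1 = false := by
      intro x i
      rw [hinf', hneg']
      exact hkey (h x i) (hK x i)
    refine ⟨⟨?_, ?_⟩, ?_, hF, ?_⟩
    · intro x y hxy
      rw [hmemF] at hxy ⊢
      obtain ⟨i, hi⟩ := hxy
      rw [hsup', hsupfst, hxnx] at hi
      exact ⟨i, by simpa using hi⟩
    · intro hEq
      obtain ⟨x⟩ := ‹Nonempty L›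
      have hx : x ⊓ ∼x ∈ F := hEq ▸ Set.mem_univ _
      rw [hmemF] at hx
      obtain ⟨i, hi⟩ := hx
      rw [hxnx] at hi
      exact Bool.false_ne_true hi
    · intro x y hxy
      rw [hmemF] at hxy
      obtain ⟨i, hi⟩ := hxy
      rw [hsup', hsupfst] at hi
      rw [Bool.or_eq_true] at hi
      rcases hi with h1 | h2
      · exact Or.inl ((hmemF x).mpr ⟨i, h1⟩)
      · exact Or.inr ((hmemF y).mpr ⟨i, h2⟩)
    · intro Y hY hsub
      by_contra hcon
      have hfalse : ∀ i : Fin n, ∃ y ∈ Y, (h y i).1 = false := by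
        intro i
        by_contra hfi
        push_neg at hfi
        apply hcon
        rw [hmemF]
        refine ⟨i, ?_⟩
        have e1 : h (Y.inf' hY id) = Y.inf' hY (fun y => h y) := by
          have := aux_map_inf' h hhi Y hY id
          simpa using this
        have e3 : (h (Y.inf' hY id) i).1 = Y.inf' hY (fun y => (h y i).1) := by
          rw [e1, Finset.inf'_apply]
          exact aux_map_inf' Prod.fst (fun a b => rfl) Y hY _
        rw [e3]
        have htle : (true : Bool) ≤ Y.inf' hY (fun y => (h y i).1) := by
          apply Finset.le_inf'
          intro y hy
          have hne := hfi y hy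
          rw [Bool.ne_false_iff] at hne
          rw [hne]
        exact le_antisymm (Bool.le_true _) htle
      choose y hyY hyf using hfalse
      have hXne : (Finset.image y Finset.univ).Nonempty :=
        ⟨y ⟨0, hn⟩, Finset.mem_image_of_mem y (Finset.mem_univ _)⟩
      have hXY : Finset.image y Finset.univ ⊆ Y := by
        intro x hx
        obtain ⟨i, -, rfl⟩ := Finset.mem_image.mp hx
        exact hyY i
      have hXc : (Finset.image y Finset.univ).card ≤ n := by
        refine le_trans Finset.card_image_le ?_
        rw [Finset.card_univ, Fintype.card_fin]
      have hXF := hsub _ hXne hXY hXc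
      rw [hmemF] at hXF
      obtain ⟨i, hi⟩ := hXF
      have hle : (Finset.image y Finset.univ).inf' hXne id ≤ y i :=
        Finset.inf'_le id (Finset.mem_image_of_mem y (Finset.mem_univ i))
      have hmono : ∀ a b : L, a ≤ b → h a ≤ h b := by
        intro a b hab
        have he := hhi a b
        rw [inf_eq_left.mpr hab] at he
        rw [he]
        exact inf_le_right
      have h2 : h ((Finset.image y Finset.univ).inf' hXne id) i ≤ h (y i) i :=
        hmono _ _ hle i
      have h3 : (h ((Finset.image y Finset.univ).inf' hXne id) i).1 ≤ (h (y i) i).1 := h2.1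
      rw [hi, hyf i] at h3
      exact absurd h3 (by decide)
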